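/- Let x ∈ Ẑ[q]^. For each root of unity ζ ∈ ℂ, let ev_ζ : Ẑ[q]^ → ℤ[ζ] denote the ring homomorphism induced by evaluation q ↦ ζ (it is well defined since evaluation at ζ annihilates ((q;q)_n) for n at least the order of ζ). If there are infinitely many roots of unity ζ ∈ ℂ of prime power order with ev_ζ(x) = 0, then x = 0. -/

import Mathlib

open Polynomial

/-- `(q;q)_n = ∏_{i=1}^n (q^i - 1)` in `ℤ[q]`. -/
noncomputable def qPoch (n : ℕ) : Polynomial ℤ :=
  ∏ i ∈ Finset.range n, (X ^ (i + 1) - 1)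

lemma qPoch_dvd_succ (n : ℕ) : qPoch n ∣ qPoch (n + 1) :=
  ⟨X ^ (n + 1) - 1, by rw [qPoch, qPoch, Finset.prod_range_succ]⟩

/-- The canonical projection `ℤ[q]/((q;q)_{n+1}) → ℤ[q]/((q;q)_n)`. -/
noncomputable def habiroTrans (n : ℕ) :
    (Polynomial ℤ ⧸ Ideal.span {qPoch (n + 1)}) →+* Polynomial ℤ ⧸ Ideal.span {qPoch n} :=
  Ideal.Quotient.factor
    (Ideal.span_singleton_le_span_singleton.mpr (qPoch_dvd_succ n))

/-- The Habiro ring `lim_n ℤ[q]/((q;q)_n)`, realized as the subring of compatible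
sequences in `∏_n ℤ[q]/((q;q)_n)`. -/
noncomputable def HabiroRing : Subring (∀ n : ℕ, Polynomial ℤ ⧸ Ideal.span {qPoch n}) where
  carrier := {x | ∀ n, habiroTrans n (x (n + 1)) = x n}
  mul_mem' {a b} ha hb n := by
    simp only [Pi.mul_apply, map_mul, ha n, hb n]
  one_mem' n := by simp only [Pi.one_apply, map_one]
  add_mem' {a b} ha hb n := by
    simp only [Pi.add_apply, map_add, ha n, hb n]
  zero_mem' n := by simp only [Pi.zero_apply, map_zero]
  neg_mem' {a} ha n := by simp only [Pi.neg_apply, map_neg, ha n]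

/-- The canonical map `η : ℤ[q] → Ẑ[q]^`. -/
noncomputable def habiroEta : Polynomial ℤ →+* HabiroRing :=
  RingHom.codRestrict (Pi.ringHom fun n => Ideal.Quotient.mk (Ideal.span {qPoch n}))
    HabiroRing (fun _ _ => Ideal.Quotient.factor_mk _ _)

/-- The projection `π_n : Ẑ[q]^ → ℤ[q]/((q;q)_n)`. -/
noncomputable def habiroPi (n : ℕ) : HabiroRing →+* Polynomial ℤ ⧸ Ideal.span {qPoch n} :=
  (Pi.evalRingHom _ n).comp HabiroRing.subtype
-- ===== Section A : basic polynomial divisibilities =====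

lemma qPoch_monic (n : ℕ) : (qPoch n).Monic := by
  apply monic_prod_of_monic
  intro i _
  simpa using monic_X_pow_sub_C (1 : ℤ) (Nat.succ_ne_zero i)

lemma cyclotomic_dvd_X_pow_mul_sub_one (d m : ℕ) (hd : 0 < d) :
    cyclotomic d ℤ ∣ X ^ (d * m) - 1 := by
  have h1 : cyclotomic d ℤ ∣ X ^ d - 1 := by
    rw [← prod_cyclotomic_eq_X_pow_sub_one hd ℤ]
    exact Finset.dvd_prod_of_mem _ (Nat.mem_divisors_self d hd.ne')
  refine h1.trans ?_
  have := sub_dvd_pow_sub_pow (X ^ d : Polynomial ℤ) 1 m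
  simpa [pow_mul] using this

lemma cyclotomic_pow_dvd_qPoch {d k n : ℕ} (hd : 0 < d) (hkn : d * k ≤ n) :
    (cyclotomic d ℤ) ^ k ∣ qPoch n := by
  classical
  set T : Finset ℕ := (Finset.range k).image (fun j => d * (j + 1) - 1) with hT
  have hinj : ∀ j₁ ∈ Finset.range k, ∀ j₂ ∈ Finset.range k,
      d * (j₁ + 1) - 1 = d * (j₂ + 1) - 1 → j₁ = j₂ := by
    intro j₁ _ j₂ _ heq
    have h1 : 1 ≤ d * (j₁ + 1) := Nat.one_le_iff_ne_zero.2 (by positivity)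
    have h2 : 1 ≤ d * (j₂ + 1) := Nat.one_le_iff_ne_zero.2 (by positivity)
    have : d * (j₁ + 1) = d * (j₂ + 1) := by omega
    exact by
      have := Nat.eq_of_mul_eq_mul_left hd this
      omega
  have hsub : T ⊆ Finset.range n := by
    intro i hi
    simp only [hT, Finset.mem_image, Finset.mem_range] at hi
    obtain ⟨j, hj, rfl⟩ := hi
    have : d * (j + 1) ≤ d * k := Nat.mul_le_mul_left d (by omega)
    have hd1 : 1 ≤ d * (j + 1) := Nat.one_le_iff_ne_zero.2 (by positivity)
    simp only [Finset.mem_range]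
    omega
  have hstep : (cyclotomic d ℤ) ^ k ∣ ∏ i ∈ T, (X ^ (i + 1) - 1 : Polynomial ℤ) := by
    rw [hT, Finset.prod_image hinj]
    have : (cyclotomic d ℤ) ^ k = ∏ j ∈ Finset.range k, cyclotomic d ℤ := by
      simp
    rw [this]
    apply Finset.prod_dvd_prod_of_dvd
    intro j _
    have hd1 : 1 ≤ d * (j + 1) := Nat.one_le_iff_ne_zero.2 (by positivity)
    have : d * (j + 1) - 1 + 1 = d * (j + 1) := by omega
    rw [this]
    exact cyclotomic_dvd_X_pow_mul_sub_one d (j + 1) hd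
  exact hstep.trans (Finset.prod_dvd_prod_of_subset T (Finset.range n) _ hsub)

lemma sub_one_pow_dvd_qPoch (n : ℕ) : (X - C 1 : Polynomial ℤ) ^ n ∣ qPoch n := by
  have := cyclotomic_pow_dvd_qPoch (d := 1) (k := n) (n := n) one_pos (by omega)
  simpa [cyclotomic_one] using this

-- Hasse derivatives of powers
lemma hasseDeriv_pow_dvd (h : Polynomial ℤ) (E i : ℕ) :
    h ^ (E - i) ∣ hasseDeriv i (h ^ E) := by
  induction E generalizing i with
  | zero =>
    simp only [Nat.zero_sub, pow_zero]
    exact one_dvd _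
  | succ E ih =>
    rcases Nat.eq_zero_or_pos i with rfl | hi
    · simp [hasseDeriv_zero]
    rw [pow_succ, mul_comm, hasseDeriv_mul]
    apply Finset.dvd_sum
    rintro ⟨u, v⟩ huv
    rw [Finset.HasAntidiagonal.mem_antidiagonal] at huv
    rcases Nat.eq_zero_or_pos u with rfl | hu
    · simp only [hasseDeriv_zero, LinearMap.id_apply]
      have hvi : v = i := by omega
      have hdvd : h ^ (E - v) ∣ hasseDeriv v (h ^ E) := ih v
      have hstep : h ^ (E + 1 - i) ∣ h * h ^ (E - v) := by
        have hle : E + 1 - i ≤ E - v + 1 := by omega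
        exact (pow_dvd_pow h hle).trans (by rw [pow_succ, mul_comm])
      exact hstep.trans (mul_dvd_mul_left h hdvd)
    · have : h ^ (E - v) ∣ hasseDeriv v (h ^ E) := ih v
      have hEv : E + 1 - i ≤ E - v := by omega
      exact ((pow_dvd_pow h hEv).trans this).trans (Dvd.intro_left _ rfl)

lemma pow_dvd_hasseDeriv_of_pow_mul_dvd {h g : Polynomial ℤ} {E j M : ℕ}
    (hE : j + M ≤ E) : h ^ M ∣ hasseDeriv j (h ^ E * g) := by
  rw [hasseDeriv_mul]
  apply Finset.dvd_sum
  rintro ⟨u, v⟩ huv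
  rw [Finset.HasAntidiagonal.mem_antidiagonal] at huv
  have h1 : h ^ (E - u) ∣ hasseDeriv u (h ^ E) := hasseDeriv_pow_dvd h E u
  have h2 : h ^ M ∣ h ^ (E - u) := pow_dvd_pow h (by omega)
  exact Dvd.dvd.mul_right (h2.trans h1) _
-- ===== Section B : key cyclotomic congruence mod p =====

lemma cyclotomic_dvd_expand {p d' : ℕ} (hp : p.Prime) (hd' : 0 < d') (hpd' : ¬ p ∣ d')
    {a : ℕ} (ha : 1 ≤ a) :
    cyclotomic (d' * p ^ a) ℤ ∣ expand ℤ (p ^ a) (cyclotomic d' ℤ) := by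
  induction a with
  | zero => omega
  | succ a ih =>
    rcases Nat.eq_zero_or_pos a with rfl | hapos
    · simp only [zero_add, pow_one]
      rw [cyclotomic_expand_eq_cyclotomic_mul hp hpd']
      exact Dvd.intro _ rfl
    · have hdvd := ih hapos
      have hexp : expand ℤ (p ^ (a + 1)) (cyclotomic d' ℤ)
          = expand ℤ p (expand ℤ (p ^ a) (cyclotomic d' ℤ)) := by
        rw [expand_expand, pow_succ, mul_comm]
      rw [hexp]
      have h2 := map_dvd (expand ℤ p).toRingHom hdvd
      simp only [AlgHom.toRingHom_eq_coe, RingHom.coe_coe] at h2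
      have h3 : expand ℤ p (cyclotomic (d' * p ^ a) ℤ) = cyclotomic (d' * p ^ (a + 1)) ℤ := by
        have hdvd' : p ∣ d' * p ^ a := Dvd.dvd.mul_left (dvd_pow_self p hapos.ne') d'
        rw [cyclotomic_expand_eq_cyclotomic hp hdvd']
        ring_nf
      rwa [h3] at h2

lemma cyclotomic_pow_prime_pow_decomp {p d' a : ℕ} (hp : p.Prime) (hd' : 0 < d')
    (hpd' : ¬ p ∣ d') (ha : 1 ≤ a) :
    ∃ U V : Polynomial ℤ,
      (cyclotomic d' ℤ) ^ (p ^ a) = C (p : ℤ) * U + cyclotomic (d' * p ^ a) ℤ * V := by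
  haveI : Fact p.Prime := ⟨hp⟩
  set Φ := cyclotomic (d' * p ^ a) ℤ with hΦ
  have hmonic : Φ.Monic := cyclotomic.monic _ ℤ
  set R := ((cyclotomic d' ℤ) ^ (p ^ a)) %ₘ Φ with hR
  have hmap : R.map (Int.castRingHom (ZMod p)) = 0 := by
    rw [hR, map_modByMonic _ hmonic]
    apply (modByMonic_eq_zero_iff_dvd (hmonic.map _)).2
    rw [Polynomial.map_pow, map_cyclotomic_int, map_cyclotomic_int]
    have h1 : cyclotomic (d' * p ^ a) (ZMod p)
        ∣ expand (ZMod p) (p ^ a) (cyclotomic d' (ZMod p)) := by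
      have h0 := map_dvd (Polynomial.mapRingHom (Int.castRingHom (ZMod p)))
        (cyclotomic_dvd_expand hp hd' hpd' ha)
      simpa only [Polynomial.coe_mapRingHom, map_expand, map_cyclotomic_int] using h0
    have h2 : expand (ZMod p) (p ^ a) (cyclotomic d' (ZMod p))
        = (cyclotomic d' (ZMod p)) ^ (p ^ a) := by
      have h4 := map_iterateFrobenius_expand (R := ZMod p) (p := p) (cyclotomic d' (ZMod p)) a
      rwa [iterateFrobenius_eq_pow, ZMod.frobenius_zmod, ← RingHom.one_def, one_pow, RingHom.one_def,
        Polynomial.map_id] at h4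
    rwa [← h2]
  have hcoeff : ∀ i, (p : ℤ) ∣ R.coeff i := by
    intro i
    have := congrArg (fun q => Polynomial.coeff q i) hmap
    simp only [Polynomial.coeff_map, Polynomial.coeff_zero] at this
    exact_mod_cast (ZMod.intCast_zmod_eq_zero_iff_dvd _ p).1 this
  obtain ⟨U, hU⟩ := (C_dvd_iff_dvd_coeff ((p : ℤ)) R).2 hcoeff
  refine ⟨U, ((cyclotomic d' ℤ) ^ (p ^ a)) /ₘ Φ, ?_⟩
  conv_lhs => rw [← modByMonic_add_div ((cyclotomic d' ℤ) ^ (p ^ a)) Φ]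
  rw [← hR, hU]

lemma int_eq_zero_of_forall_prime_pow_dvd {p : ℕ} (hp : 1 < p) {c : ℤ}
    (h : ∀ t : ℕ, ((p : ℤ)) ^ t ∣ c) : c = 0 := by
  by_contra hc
  obtain ⟨t, ht⟩ : ∃ t : ℕ, c.natAbs < p ^ t := ⟨c.natAbs, Nat.lt_pow_self (n := c.natAbs) hp⟩
  have h2 : ((p : ℤ)) ^ t ∣ |c| := (dvd_abs _ _).2 (h t)
  have h3 : ((p : ℤ)) ^ t ≤ |c| := Int.le_of_dvd (abs_pos.2 hc) h2
  have h4 : (p : ℤ) ^ t = ((p ^ t : ℕ) : ℤ) := by push_cast; ring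
  rw [h4] at h3
  have h5 : |c| = (c.natAbs : ℤ) := Int.abs_eq_natAbs c
  omega
-- ===== Section D : from vanishing Hasse derivatives to cyclotomic power divisibility =====

lemma hasseDeriv_map' (j : ℕ) (g : Polynomial ℤ) (φ : ℤ →+* ℂ) :
    hasseDeriv j (g.map φ) = (hasseDeriv j g).map φ := by
  ext n
  simp only [hasseDeriv_coeff, coeff_map, map_mul, map_natCast]

lemma taylor_comp_X_sub_C {R : Type*} [CommRing R] (r : R) (P : Polynomial R) :
    (taylor r P).comp (X - C r) = P := by
  rw [taylor_apply, comp_assoc]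
  simp

lemma cyclotomic_pow_dvd_of_hasseDeriv {d e : ℕ} (hd : 0 < d) {g : Polynomial ℤ}
    (hder : ∀ j < e, cyclotomic d ℤ ∣ hasseDeriv j g) :
    (cyclotomic d ℤ) ^ e ∣ g := by
  classical
  set P : Polynomial ℂ := g.map (Int.castRingHom ℂ) with hP
  have hlin : ∀ μ ∈ primitiveRoots d ℂ, (X - C μ) ^ e ∣ P := by
    intro μ hμ
    have hμprim : IsPrimitiveRoot μ d := (mem_primitiveRoots hd).1 hμ
    have hcoeff : ∀ j < e, (taylor μ P).coeff j = 0 := by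
      intro j hj
      rw [taylor_coeff, hP, hasseDeriv_map', eval_map]
      obtain ⟨w, hw⟩ := hder j hj
      rw [hw]
      have hcyc : eval₂ (Int.castRingHom ℂ) μ (cyclotomic d ℤ) = 0 := by
        rw [← eval_map, map_cyclotomic_int]
        exact hμprim.isRoot_cyclotomic hd
      rw [eval₂_mul, hcyc, zero_mul]
    have hXe : (X : Polynomial ℂ) ^ e ∣ taylor μ P := X_pow_dvd_iff.2 hcoeff
    obtain ⟨H, hH⟩ := hXe
    have := congrArg (fun q => Polynomial.comp q (X - C μ)) hH
    rw [taylor_comp_X_sub_C, mul_comp, pow_comp, X_comp] at this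
    exact ⟨H.comp (X - C μ), this⟩
  have hprod : (cyclotomic d ℂ) ^ e ∣ P := by
    obtain ⟨ζ, hζ⟩ : ∃ ζ : ℂ, IsPrimitiveRoot ζ d :=
      ⟨Complex.exp (2 * Real.pi * Complex.I / d), Complex.isPrimitiveRoot_exp d hd.ne'⟩
    rw [cyclotomic_eq_prod_X_sub_primitiveRoots hζ, ← Finset.prod_pow]
    refine Finset.prod_dvd_of_coprime ?_ (fun μ hμ => hlin μ hμ)
    intro μ hμ ν hν hne
    exact ((Polynomial.pairwise_coprime_X_sub_C (Function.injective_id)) hne).pow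
  -- descend to ℤ
  have hmonic : ((cyclotomic d ℤ) ^ e).Monic := (cyclotomic.monic d ℤ).pow e
  have hmod : (g %ₘ ((cyclotomic d ℤ) ^ e)).map (Int.castRingHom ℂ) = 0 := by
    rw [map_modByMonic _ hmonic]
    apply (modByMonic_eq_zero_iff_dvd (hmonic.map _)).2
    rw [Polynomial.map_pow, map_cyclotomic_int]
    exact hprod
  have hinj : Function.Injective (Polynomial.map (Int.castRingHom ℂ)) :=
    Polynomial.map_injective _ Int.cast_injective
  have : g %ₘ ((cyclotomic d ℤ) ^ e) = 0 := hinj (by simpa using hmod)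
  exact (modByMonic_eq_zero_iff_dvd hmonic).1 this
-- ===== Section C : descend + representative stability =====

lemma int_dvd_of_complex_dvd {g q : Polynomial ℤ} (hq : q.Monic)
    (h : q.map (Int.castRingHom ℂ) ∣ g.map (Int.castRingHom ℂ)) : q ∣ g := by
  have hmod : (g %ₘ q).map (Int.castRingHom ℂ) = 0 := by
    rw [map_modByMonic _ hq]
    exact (modByMonic_eq_zero_iff_dvd (hq.map _)).2 h
  have hinj : Function.Injective (Polynomial.map (Int.castRingHom ℂ)) :=
    Polynomial.map_injective _ Int.cast_injective
  have : g %ₘ q = 0 := hinj (by simpa using hmod)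
  exact (modByMonic_eq_zero_iff_dvd hq).1 this

lemma stable_eval_one_hasseDeriv {f : ℕ → Polynomial ℤ}
    (hcompat : ∀ {n N : ℕ}, n ≤ N → qPoch n ∣ f N - f n) {j N : ℕ} (hjN : j < N) :
    (hasseDeriv j (f N)).eval 1 = (hasseDeriv j (f (j + 1))).eval 1 := by
  have h1 : qPoch (j + 1) ∣ f N - f (j + 1) := hcompat hjN
  obtain ⟨g, hg⟩ : (X - C 1 : Polynomial ℤ) ^ (j + 1) ∣ f N - f (j + 1) :=
    (sub_one_pow_dvd_qPoch (j + 1)).trans h1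
  have h2 : (X - C 1 : Polynomial ℤ) ^ 1 ∣ hasseDeriv j (f N - f (j + 1)) := by
    rw [hg]
    exact pow_dvd_hasseDeriv_of_pow_mul_dvd (by omega)
  obtain ⟨w, hw⟩ := h2
  have h3 : hasseDeriv j (f N) - hasseDeriv j (f (j + 1)) = (X - C 1) ^ 1 * w := by
    rw [← hw, map_sub]
  have := congrArg (Polynomial.eval 1) h3
  simp only [eval_sub, eval_mul, eval_pow, eval_sub, eval_X, eval_C, sub_self,
    pow_one, zero_mul] at this
  omega

lemma stable_modByMonic_hasseDeriv {f : ℕ → Polynomial ℤ}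
    (hcompat : ∀ {n N : ℕ}, n ≤ N → qPoch n ∣ f N - f n) {d j N : ℕ} (hd : 0 < d)
    (hN : d * (j + 1) ≤ N) :
    (hasseDeriv j (f N)) %ₘ cyclotomic d ℤ
      = (hasseDeriv j (f (d * (j + 1)))) %ₘ cyclotomic d ℤ := by
  have h1 : qPoch (d * (j + 1)) ∣ f N - f (d * (j + 1)) := hcompat hN
  obtain ⟨g, hg⟩ : (cyclotomic d ℤ) ^ (j + 1) ∣ f N - f (d * (j + 1)) :=
    (cyclotomic_pow_dvd_qPoch hd le_rfl).trans h1
  have h2 : (cyclotomic d ℤ) ^ 1 ∣ hasseDeriv j (f N - f (d * (j + 1))) := by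
    rw [hg]
    exact pow_dvd_hasseDeriv_of_pow_mul_dvd (by omega)
  have h3 : cyclotomic d ℤ ∣ hasseDeriv j (f N) - hasseDeriv j (f (d * (j + 1))) := by
    rw [← map_sub]
    simpa using h2
  have h4 : (hasseDeriv j (f N) - hasseDeriv j (f (d * (j + 1)))) %ₘ cyclotomic d ℤ = 0 :=
    (modByMonic_eq_zero_iff_dvd (cyclotomic.monic d ℤ)).2 h3
  rw [sub_modByMonic, sub_eq_zero] at h4
  exact h4
-- ===== Section E : arithmetic at prime-power roots of unity =====

lemma exists_p_eq_pow_mul {p k m : ℕ} (hp : p.Prime) (hm : m = p ^ k) (hm2 : 2 ≤ m)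
    {ζ : ℂ} (hζ : IsPrimitiveRoot ζ m) :
    ∃ G : Polynomial ℤ,
      (p : ℂ) = (ζ - 1) ^ m.totient * eval₂ (Int.castRingHom ℂ) ζ G
        ∧ ¬ ((p : ℤ) ∣ G.eval 1) := by
  classical
  haveI : Fact p.Prime := ⟨hp⟩
  haveI : NeZero m := ⟨by omega⟩
  have hmpos : 0 < m := by omega
  have hk : k ≠ 0 := by rintro rfl; simp at hm; omega
  have hex : ∀ μ ∈ primitiveRoots m ℂ, ∃ i, i < m ∧ ζ ^ i = μ ∧ i.Coprime m := by
    intro μ hμ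
    have hμprim : IsPrimitiveRoot μ m := (mem_primitiveRoots hmpos).1 hμ
    obtain ⟨i, hi, hpow⟩ := hζ.eq_pow_of_pow_eq_one hμprim.pow_eq_one
    exact ⟨i, hi, hpow, (hζ.pow_iff_coprime hmpos i).1 (hpow ▸ hμprim)⟩
  set I : ℂ → ℕ := fun μ =>
    if h : ∃ i, i < m ∧ ζ ^ i = μ ∧ i.Coprime m then h.choose else 0 with hI
  have hIspec : ∀ μ ∈ primitiveRoots m ℂ, ζ ^ (I μ) = μ ∧ (I μ).Coprime m := by
    intro μ hμ
    have h := hex μ hμ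
    simp only [hI, dif_pos h]
    exact ⟨h.choose_spec.2.1, h.choose_spec.2.2⟩
  set G : Polynomial ℤ :=
    ∏ μ ∈ primitiveRoots m ℂ, (- ∑ l ∈ Finset.range (I μ), X ^ l) with hG
  set ev : Polynomial ℤ →+* ℂ := eval₂RingHom (Int.castRingHom ℂ) ζ with hev
  refine ⟨G, ?_, ?_⟩
  · -- p = (ζ-1)^φ(m) * ev G
    obtain ⟨k', rfl⟩ : ∃ k', k = k' + 1 := ⟨k - 1, by omega⟩
    have h1 : ((cyclotomic m ℂ).eval 1 : ℂ) = (p : ℂ) := by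
      rw [hm]; exact_mod_cast eval_one_cyclotomic_prime_pow k'
    have h2 : cyclotomic m ℂ = ∏ μ ∈ primitiveRoots m ℂ, (X - C μ) :=
      cyclotomic_eq_prod_X_sub_primitiveRoots hζ
    have h3 : (p : ℂ) = ∏ μ ∈ primitiveRoots m ℂ, (1 - μ) := by
      rw [← h1, h2, eval_prod]
      simp
    have h4 : ∀ μ ∈ primitiveRoots m ℂ,
        (1 - μ) = (ζ - 1) * ev (- ∑ l ∈ Finset.range (I μ), X ^ l) := by
      intro μ hμ
      obtain ⟨hpow, _⟩ := hIspec μ hμ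
      have hge : ev (∑ l ∈ Finset.range (I μ), X ^ l) = ∑ l ∈ Finset.range (I μ), ζ ^ l := by
        rw [map_sum]
        congr 1; funext l
        simp [hev]
      have hgeom := geom_sum_mul ζ (I μ)
      have : (ζ - 1) * ev (∑ l ∈ Finset.range (I μ), X ^ l) = ζ ^ (I μ) - 1 := by
        rw [hge, mul_comm]; exact hgeom
    -- (ζ-1) * ev(-sum) = -(ζ^i - 1) = 1 - μ
      rw [map_neg, mul_neg, this, hpow]
      ring
    rw [h3, Finset.prod_congr rfl h4, Finset.prod_mul_distrib, Finset.prod_const,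
      hζ.card_primitiveRoots, ← map_prod]
    rfl
  · -- p does not divide G.eval 1
    have hGeval : G.eval 1 = ∏ μ ∈ primitiveRoots m ℂ, (- (I μ : ℤ)) := by
      rw [hG, eval_prod]
      congr 1; funext μ
      simp [eval_finset_sum]
    rw [hGeval]
    have hpz : Prime ((p : ℤ)) := Nat.prime_iff_prime_int.1 hp
    intro hdvd
    obtain ⟨μ, hμ, hdvd'⟩ := hpz.exists_mem_finset_dvd hdvd
    rw [Int.dvd_neg] at hdvd'
    have hcop := (hIspec μ hμ).2
    have hpi : p ∣ I μ := by exact_mod_cast Int.ofNat_dvd.1 (by exact_mod_cast hdvd')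
    have hpm : p ∣ m := by rw [hm]; exact dvd_pow_self p hk
    have : p ∣ Nat.gcd (I μ) m := Nat.dvd_gcd hpi hpm
    rw [Nat.Coprime] at hcop
    rw [hcop] at this
    exact hp.one_lt.ne' (Nat.eq_one_of_dvd_one this)

lemma cyclotomic_int_dvd_of_eval₂_eq_zero {m : ℕ} (hm : 0 < m) {ζ : ℂ}
    (hζ : IsPrimitiveRoot ζ m) {P : Polynomial ℤ}
    (hP : eval₂ (Int.castRingHom ℂ) ζ P = 0) : cyclotomic m ℤ ∣ P := by
  have hint : IsIntegral ℤ ζ := hζ.isIntegral hm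
  have hdvd := minpoly.isIntegrallyClosed_dvd hint (p := P) ?_
  · rwa [← cyclotomic_eq_minpoly hζ hm] at hdvd
  · rwa [aeval_def, algebraMap_int_eq]
-- ===== Section F : the key contradiction at a prime-power root of unity =====

lemma int_p_decomp {p : ℕ} (hp : p.Prime) {c : ℤ} (hc : c ≠ 0) :
    ∃ u : ℤ, c = (p : ℤ) ^ (c.natAbs.factorization p) * u ∧ ¬ ((p : ℤ) ∣ u) := by
  set v := c.natAbs.factorization p with hv
  have h1 : (p : ℤ) ^ v ∣ c := by
    have : p ^ v ∣ c.natAbs := Nat.ordProj_dvd _ _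
    have h2 : ((p ^ v : ℕ) : ℤ) ∣ (c.natAbs : ℤ) := Int.natCast_dvd_natCast.2 this
    rw [Int.dvd_natAbs] at h2
    exact_mod_cast h2
  refine ⟨c / (p : ℤ) ^ v, (Int.mul_ediv_cancel' h1).symm, ?_⟩
  intro hdvd
  have h3 : (p : ℤ) ^ (v + 1) ∣ c := by
    obtain ⟨w, hw⟩ := hdvd
    refine ⟨w, ?_⟩
    rw [pow_succ, mul_assoc, ← hw, Int.mul_ediv_cancel' h1]
  have h4 : p ^ (v + 1) ∣ c.natAbs := by
    have := Int.dvd_natAbs.2 h3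
    exact_mod_cast this
  exact Nat.pow_succ_factorization_not_dvd (Int.natAbs_ne_zero.2 hc) hp h4

lemma step1_contradiction {p k m N : ℕ} (hp : p.Prime) (hm : m = p ^ k) (hm2 : 2 ≤ m)
    {ζ : ℂ} (hζ : IsPrimitiveRoot ζ m)
    (a : ℕ → ℤ) (s Js : ℕ)
    (haJ : a Js ≠ 0) (hvJ : (a Js).natAbs.factorization p = s)
    (hmins : ∀ j, a j ≠ 0 → s ≤ (a j).natAbs.factorization p)
    (hminJ : ∀ j, a j ≠ 0 → (a j).natAbs.factorization p = s → Js ≤ j)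
    (hφ : Js < m.totient)
    {F : Polynomial ℤ} (hcoe : ∀ j < N, F.coeff j = a j)
    (hN : s * m.totient + Js + 1 ≤ N)
    (hev : eval₂ (Int.castRingHom ℂ) (ζ - 1) F = 0) : False := by
  classical
  haveI : Fact p.Prime := ⟨hp⟩
  set φm := m.totient with hφm
  set B := s * φm + Js with hB
  set π : ℂ := ζ - 1 with hπdef
  have hπ : π ≠ 0 := sub_ne_zero.2 (hζ.ne_one (by omega))
  obtain ⟨G, hG, hGp⟩ := exists_p_eq_pow_mul hp hm hm2 hζ
  set ev : Polynomial ℤ →+* ℂ := eval₂RingHom (Int.castRingHom ℂ) ζ with hevdef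
  set R₀ : Subring ℂ := ev.range with hR₀
  have hπR : π ∈ R₀ := ⟨X - 1, by simp [hevdef, hπdef]⟩
  have hGR : ev G ∈ R₀ := ⟨G, rfl⟩
  have hintR : ∀ c : ℤ, (c : ℂ) ∈ R₀ := fun c => ⟨C c, by simp [hevdef]⟩
  have hpv : ∀ v : ℕ, ((p : ℂ)) ^ v = π ^ (v * φm) * (ev G) ^ v := by
    intro v
    have hevG : ev G = eval₂ (Int.castRingHom ℂ) ζ G := rfl
    rw [hG, mul_pow, ← pow_mul, mul_comm φm v, ← hevG, ← hπdef]
  have hsum : ∑ j ∈ Finset.range (F.natDegree + 1), ((F.coeff j : ℂ)) * π ^ j = 0 := by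
    have := eval₂_eq_sum_range (Int.castRingHom ℂ) π (p := F)
    rw [this] at hev
    simpa using hev
  have hJsN : Js < N := by omega
  have hcJs : F.coeff Js = a Js := hcoe Js hJsN
  have hJd : Js ≤ F.natDegree := le_natDegree_of_ne_zero (by rw [hcJs]; exact haJ)
  have hJmem : Js ∈ Finset.range (F.natDegree + 1) := by
    simp only [Finset.mem_range]; omega
  -- each term other than Js contributes a multiple of π^(B+1)
  have hterm : ∀ j ∈ (Finset.range (F.natDegree + 1)).erase Js,
      ((F.coeff j : ℂ)) * π ^ j / π ^ (B + 1) ∈ R₀ := by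
    intro j hj
    obtain ⟨hjne, hjr⟩ := Finset.mem_erase.1 hj
    by_cases hz : F.coeff j = 0
    · rw [hz]
      simpa using Subring.zero_mem R₀
    rcases lt_or_ge j N with hjN | hjN
    · have haj : a j ≠ 0 := by rw [← hcoe j hjN]; exact hz
      set v := (a j).natAbs.factorization p with hvdef
      obtain ⟨u, hu, hpu⟩ := int_p_decomp hp haj
      have hge : B + 1 ≤ v * φm + j := by
        rcases Nat.lt_or_ge j Js with hlt | hge'
        · -- j < Js forces v ≥ s + 1
          have hvs : s ≤ v := hmins j haj
          have hne : v ≠ s := by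
            intro hvs'
            have := hminJ j haj (by rw [← hvdef, hvs'])
            omega
          have hsv : s + 1 ≤ v := by omega
          calc B + 1 = s * φm + Js + 1 := rfl
            _ ≤ s * φm + φm := by omega
            _ = (s + 1) * φm := by ring
            _ ≤ v * φm := Nat.mul_le_mul_right _ hsv
            _ ≤ v * φm + j := Nat.le_add_right _ _
        · have hvs : s ≤ v := hmins j haj
          have hj' : Js < j := by omega
          calc B + 1 = s * φm + (Js + 1) := by omega
            _ ≤ v * φm + j := by
                have : s * φm ≤ v * φm := Nat.mul_le_mul_right _ hvs
                omega
      obtain ⟨c, hc⟩ : ∃ c, v * φm + j = (B + 1) + c := ⟨v * φm + j - (B + 1), by omega⟩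
      have hexp : π ^ (v * φm) * π ^ j = π ^ (B + 1) * π ^ c := by
        rw [← pow_add, ← pow_add, hc]
      have hterm1 : ((F.coeff j : ℂ)) * π ^ j
          = π ^ (B + 1) * (π ^ c * ((ev G) ^ v * (u : ℂ))) := by
        rw [hcoe j hjN, hu]
        push_cast
        rw [hpv v]
        linear_combination ((ev G) ^ v * (u : ℂ)) * hexp
      rw [hterm1, mul_div_cancel_left₀ _ (pow_ne_zero _ hπ)]
      exact Subring.mul_mem _ (Subring.pow_mem _ hπR _)
        (Subring.mul_mem _ (Subring.pow_mem _ hGR _) (hintR u))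
    · obtain ⟨c, hc⟩ : ∃ c, j = (B + 1) + c := ⟨j - (B + 1), by omega⟩
      have hexp : π ^ j = π ^ (B + 1) * π ^ c := by rw [hc, pow_add]
      have hterm1 : ((F.coeff j : ℂ)) * π ^ j
          = π ^ (B + 1) * (π ^ c * (F.coeff j : ℂ)) := by
        linear_combination ((F.coeff j : ℂ)) * hexp
      rw [hterm1, mul_div_cancel_left₀ _ (pow_ne_zero _ hπ)]
      exact Subring.mul_mem _ (Subring.pow_mem _ hπR _) (hintR _)
  set w : ℂ := ∑ j ∈ (Finset.range (F.natDegree + 1)).erase Js,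
      ((F.coeff j : ℂ)) * π ^ j / π ^ (B + 1) with hwdef
  have hwR : w ∈ R₀ := Subring.sum_mem _ hterm
  have hsplit : (a Js : ℂ) * π ^ Js + π ^ (B + 1) * w = 0 := by
    have h5 := Finset.add_sum_erase (Finset.range (F.natDegree + 1))
      (fun j => ((F.coeff j : ℂ)) * π ^ j) hJmem
    have h6 : π ^ (B + 1) * w
        = ∑ j ∈ (Finset.range (F.natDegree + 1)).erase Js, ((F.coeff j : ℂ)) * π ^ j := by
      rw [hwdef, Finset.mul_sum]
      apply Finset.sum_congr rfl
      intro j _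
      rw [mul_div_cancel₀]
      exact pow_ne_zero _ hπ
    rw [h6, ← hcJs]
    rw [← hsum, ← h5]
  -- extract the unit part of a Js
  obtain ⟨u0, hu0, hpu0⟩ := int_p_decomp hp haJ
  rw [hvJ] at hu0
  have hzero : (ev G) ^ s * (u0 : ℂ) + π * w = 0 := by
    have h7 : π ^ (s * φm + Js) * ((ev G) ^ s * (u0 : ℂ) + π * w) = 0 := by
      have h8 : (a Js : ℂ) = (p : ℂ) ^ s * (u0 : ℂ) := by rw [hu0]; push_cast; ring
      rw [mul_add]
      have h9 : π ^ (s * φm + Js) * ((ev G) ^ s * (u0 : ℂ)) = (a Js : ℂ) * π ^ Js := by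
        rw [h8, hpv s, pow_add]
        ring
      have h10 : π ^ (s * φm + Js) * (π * w) = π ^ (B + 1) * w := by
        rw [hB, pow_succ]
        ring
      rw [h9, h10, hsplit]
    rcases mul_eq_zero.1 h7 with h | h
    · exact absurd h (pow_ne_zero _ hπ)
    · exact h
  obtain ⟨W, hW⟩ := hwR
  set P : Polynomial ℤ := G ^ s * C u0 + (X - 1) * W with hPdef
  have hPz : eval₂ (Int.castRingHom ℂ) ζ P = 0 := by
    have : eval₂ (Int.castRingHom ℂ) ζ P = ev P := rfl
    rw [this, hPdef, map_add, map_mul, map_mul, map_pow, map_sub]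
    have hX : ev X = ζ := by simp [hevdef]
    have h1 : ev 1 = 1 := map_one ev
    have hC : ev (C u0) = (u0 : ℂ) := by simp [hevdef]
    rw [hX, h1, hC, hW]
    exact hzero
  obtain ⟨Q, hQ⟩ := cyclotomic_int_dvd_of_eval₂_eq_zero (by omega) hζ hPz
  have heval1 := congrArg (Polynomial.eval 1) hQ
  have hk0 : k ≠ 0 := by rintro rfl; rw [pow_zero] at hm; omega
  obtain ⟨k', rfl⟩ : ∃ k', k = k' + 1 := ⟨k - 1, by omega⟩
  have hΦ1 : (cyclotomic m ℤ).eval 1 = (p : ℤ) := by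
    rw [hm]; exact_mod_cast eval_one_cyclotomic_prime_pow k'
  rw [eval_mul, hΦ1] at heval1
  have heval2 : G.eval 1 ^ s * u0 = (p : ℤ) * Q.eval 1 := by
    have := heval1
    simp only [hPdef, eval_add, eval_mul, eval_pow, eval_sub, eval_X, eval_one, eval_C,
      sub_self, zero_mul, add_zero] at this
    exact this
  have hpz : Prime ((p : ℤ)) := Nat.prime_iff_prime_int.1 hp
  have hdvd : (p : ℤ) ∣ G.eval 1 ^ s * u0 := ⟨Q.eval 1, heval2⟩
  rcases hpz.dvd_mul.1 hdvd with h | h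
  · exact hGp (hpz.dvd_of_dvd_pow h)
  · exact hpu0 h
-- ===== Section G : all Taylor coefficients at 1 vanish =====

lemma prime_pow_le_two_mul_totient {p k m : ℕ} (hp : p.Prime) (hm : m = p ^ k)
    (hm2 : 2 ≤ m) : m ≤ 2 * m.totient := by
  have hk0 : k ≠ 0 := by rintro rfl; rw [pow_zero] at hm; omega
  have htot : m.totient = p ^ (k - 1) * (p - 1) := by
    rw [hm, Nat.totient_prime_pow hp (by omega)]
  have hm' : m = p ^ (k - 1) * p := by rw [hm, ← pow_succ]; congr 1; omega
  have hp2 : 2 ≤ p := hp.two_le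
  rw [htot, hm']
  calc p ^ (k-1) * p ≤ p ^ (k-1) * (2 * (p-1)) := Nat.mul_le_mul_left _ (by omega)
    _ = 2 * (p ^ (k-1) * (p-1)) := by ring

lemma nat_dvd_int_of_dvd_natAbs {p : ℕ} {c : ℤ} (h : p ∣ c.natAbs) : (p : ℤ) ∣ c := by
  have h1 : (p : ℤ) ∣ (c.natAbs : ℤ) := Int.natCast_dvd_natCast.2 h
  exact h1.trans ((Int.natAbs_dvd).2 dvd_rfl)

lemma taylor_coeffs_vanish {f : ℕ → Polynomial ℤ}
    (hcompat : ∀ {n N : ℕ}, n ≤ N → qPoch n ∣ f N - f n)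
    {T : Set ℂ} (hT : T.Infinite)
    (hord : ∀ ζ ∈ T, ∃ p k : ℕ, p.Prime ∧ orderOf ζ = p ^ k)
    (hev : ∀ ζ ∈ T, ∀ N, orderOf ζ ≤ N → eval₂ (Int.castRingHom ℂ) ζ (f N) = 0) :
    ∀ j, (hasseDeriv j (f (j + 1))).eval 1 = 0 := by
  classical
  set a : ℕ → ℤ := fun j => (hasseDeriv j (f (j + 1))).eval 1 with ha
  by_contra hcon
  push_neg at hcon
  obtain ⟨J, hJ⟩ := hcon
  set sp : ℕ → ℕ :=
    fun p => sInf {v | ∃ j, a j ≠ 0 ∧ (a j).natAbs.factorization p = v} with hsp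
  set Jp : ℕ → ℕ :=
    fun p => sInf {j | a j ≠ 0 ∧ (a j).natAbs.factorization p = sp p} with hJp
  have hspne : ∀ p, {v | ∃ j, a j ≠ 0 ∧ (a j).natAbs.factorization p = v}.Nonempty :=
    fun p => ⟨(a J).natAbs.factorization p, J, hJ, rfl⟩
  have hJpmem : ∀ p, a (Jp p) ≠ 0 ∧ (a (Jp p)).natAbs.factorization p = sp p := by
    intro p
    have h1 : sp p ∈ {v | ∃ j, a j ≠ 0 ∧ (a j).natAbs.factorization p = v} :=
      Nat.sInf_mem (hspne p)
    obtain ⟨j, hj1, hj2⟩ := h1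
    have h2 : {j | a j ≠ 0 ∧ (a j).natAbs.factorization p = sp p}.Nonempty := ⟨j, hj1, hj2⟩
    exact Nat.sInf_mem h2
  have hJple : ∀ p : ℕ, ¬ ((p : ℤ) ∣ a J) → Jp p ≤ J := by
    intro p hnd
    have hv0 : (a J).natAbs.factorization p = 0 := by
      apply Nat.factorization_eq_zero_of_not_dvd
      intro hdvd
      exact hnd (nat_dvd_int_of_dvd_natAbs hdvd)
    have hsp0 : sp p = 0 := Nat.le_zero.1 (Nat.sInf_le ⟨J, hJ, hv0⟩)
    exact Nat.sInf_le ⟨hJ, by rw [hsp0]; exact hv0⟩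
  have hbound : ∃ ζ ∈ T, 2 ≤ orderOf ζ
      ∧ ∃ p k : ℕ, p.Prime ∧ orderOf ζ = p ^ k ∧ Jp p < (orderOf ζ).totient := by
    by_contra hno
    push_neg at hno
    set A := (a J).natAbs with hA
    have hA0 : A ≠ 0 := Int.natAbs_ne_zero.2 hJ
    set Mx := Finset.sup (Finset.range (A + 1)) Jp with hMx
    set L := max 1 (max (2 * J) (2 * Mx)) with hL
    have horder : ∀ ζ ∈ T, orderOf ζ ≤ L ∧ 1 ≤ orderOf ζ := by
      intro ζ hζT
      obtain ⟨p, k, hp, hpk⟩ := hord ζ hζT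
      have hpos : 1 ≤ orderOf ζ := by rw [hpk]; exact Nat.one_le_pow _ _ hp.pos
      rcases Nat.lt_or_ge (orderOf ζ) 2 with h2 | h2
      · exact ⟨by omega, hpos⟩
      · have hJple' := hno ζ hζT h2 p k hp hpk
        have hm2φ : orderOf ζ ≤ 2 * (orderOf ζ).totient :=
          prime_pow_le_two_mul_totient hp hpk h2
        by_cases hpd : (p : ℤ) ∣ a J
        · have hpA : p ∣ A := by
            have := Int.natAbs_dvd_natAbs.2 hpd
            simpa [hA] using this
          have hpA' : p ≤ A := Nat.le_of_dvd (by omega) hpA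
          have hJpMx : Jp p ≤ Mx :=
            Finset.le_sup (by simp only [Finset.mem_range]; omega)
          exact ⟨by omega, hpos⟩
        · have hJpJ : Jp p ≤ J := hJple p hpd
          exact ⟨by omega, hpos⟩
    have hfin : T.Finite := by
      apply Set.Finite.subset (Polynomial.nthRootsFinset (L.factorial) (1 : ℂ)).finite_toSet
      intro ζ hζT
      obtain ⟨hle, hpos⟩ := horder ζ hζT
      have hdvd : orderOf ζ ∣ L.factorial := Nat.dvd_factorial hpos hle
      have hpow : ζ ^ (L.factorial) = 1 := orderOf_dvd_iff_pow_eq_one.1 hdvd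
      show ζ ∈ (Polynomial.nthRootsFinset (L.factorial) (1 : ℂ) : Set ℂ)
      rw [Finset.mem_coe, Polynomial.mem_nthRootsFinset (Nat.factorial_pos L)]
      exact hpow
    exact hT hfin
  obtain ⟨ζ, hζT, hord2, p, k, hp, hpk, hφ⟩ := hbound
  have hζprim : IsPrimitiveRoot ζ (orderOf ζ) := IsPrimitiveRoot.orderOf ζ
  set N := max (orderOf ζ) (sp p * (orderOf ζ).totient + Jp p + 1) with hNdef
  apply step1_contradiction hp hpk hord2 hζprim a (sp p) (Jp p)
    (hJpmem p).1 (hJpmem p).2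
    (fun j hj => Nat.sInf_le ⟨j, hj, rfl⟩)
    (fun j hj hv => Nat.sInf_le ⟨hj, hv⟩)
    hφ (F := taylor 1 (f N)) (N := N) ?_ (le_max_right _ _) ?_
  · intro j hjN
    rw [taylor_coeff]
    exact stable_eval_one_hasseDeriv hcompat hjN
  · have hfN : eval₂ (Int.castRingHom ℂ) ζ (f N) = 0 := hev ζ hζT N (le_max_left _ _)
    have hcomp : (f N) = (taylor 1 (f N)).comp (X - C 1) :=
      (taylor_comp_X_sub_C 1 (f N)).symm
    rw [hcomp, eval₂_comp] at hfN
    simpa using hfN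
-- ===== Section H : the main induction on d =====

lemma main_induction {f : ℕ → Polynomial ℤ}
    (hcompat : ∀ {n N : ℕ}, n ≤ N → qPoch n ∣ f N - f n)
    (hbase : ∀ j, (hasseDeriv j (f (j + 1))).eval 1 = 0) :
    ∀ d : ℕ, 0 < d → ∀ e N : ℕ, d * e ≤ N → (cyclotomic d ℤ) ^ e ∣ f N := by
  intro d
  induction d using Nat.strong_induction_on with
  | _ d IH =>
    intro hd e N hN
    rcases eq_or_lt_of_le (show 1 ≤ d from hd) with hd1 | hd2
    · -- d = 1
      rcases hd1 with rfl | h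
      apply cyclotomic_pow_dvd_of_hasseDeriv one_pos
      intro j hj
      rw [cyclotomic_one]
      have hX : (X - 1 : Polynomial ℤ) = X - C 1 := by rw [map_one]
      rw [hX, dvd_iff_isRoot]
      have hjN : j < N := by omega
      have := stable_eval_one_hasseDeriv hcompat hjN
      rw [IsRoot.def, this]
      exact hbase j
    · -- 2 ≤ d
      have hdne1 : d ≠ 1 := by omega
      set p := d.minFac with hpdef
      have hp : p.Prime := Nat.minFac_prime hdne1
      set aexp := d.factorization p with haexp
      have hpd : p ∣ d := Nat.minFac_dvd d
      have hap : 1 ≤ aexp := (Nat.Prime.factorization_pos_of_dvd hp (by omega) hpd)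
      set d' := d / p ^ aexp with hd'def
      have hdd : p ^ aexp * d' = d := Nat.ordProj_mul_ordCompl_eq_self d p
      have hd'pos : 0 < d' := Nat.ordCompl_pos p (by omega)
      have hpd' : ¬ p ∣ d' := Nat.not_dvd_ordCompl hp (by omega)
      have hpa2 : 2 ≤ p ^ aexp := by
        calc 2 ≤ p := hp.two_le
          _ = p ^ 1 := (pow_one p).symm
          _ ≤ p ^ aexp := Nat.pow_le_pow_right hp.pos hap
      have hd'lt : d' < d := by
        have h1 : 2 * d' ≤ p ^ aexp * d' := Nat.mul_le_mul_right d' hpa2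
        omega
      have hmonic := cyclotomic.monic d ℤ
      have hkey : ∀ j N' : ℕ, d * (j + 1) ≤ N' → cyclotomic d ℤ ∣ hasseDeriv j (f N') := by
        intro j N' hN'
        have hstab := stable_modByMonic_hasseDeriv hcompat (d := d) (j := j) (by omega) hN'
        suffices hB0 : (hasseDeriv j (f (d * (j + 1)))) %ₘ cyclotomic d ℤ = 0 by
          rw [hB0] at hstab
          exact (modByMonic_eq_zero_iff_dvd hmonic).1 hstab
        apply Polynomial.ext
        intro i
        rw [coeff_zero]
        apply int_eq_zero_of_forall_prime_pow_dvd hp.one_lt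
        intro t
        set E := j + p ^ aexp * t with hE
        set N'' := max (d' * E) (d * (j + 1)) with hN''
        have hIH : (cyclotomic d' ℤ) ^ E ∣ f N'' :=
          IH d' hd'lt hd'pos E N'' (le_max_left _ _)
        obtain ⟨g, hg⟩ := hIH
        have h1 : (cyclotomic d' ℤ) ^ (p ^ aexp * t) ∣ hasseDeriv j (f N'') := by
          rw [hg]
          exact pow_dvd_hasseDeriv_of_pow_mul_dvd (by omega)
        obtain ⟨U, V, hUV⟩ := cyclotomic_pow_prime_pow_decomp hp hd'pos hpd' hap
        have hdd' : d' * p ^ aexp = d := by rw [mul_comm]; exact hdd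
        rw [hdd'] at hUV
        have h2 : ∃ V₂ : Polynomial ℤ, (cyclotomic d' ℤ) ^ (p ^ aexp * t)
            = (C ((p : ℤ))) ^ t * U ^ t + cyclotomic d ℤ * V₂ := by
          have hsub := sub_dvd_pow_sub_pow ((cyclotomic d' ℤ) ^ (p ^ aexp)) (C ((p : ℤ)) * U) t
          have hdvd1 : cyclotomic d ℤ ∣
              (cyclotomic d' ℤ) ^ (p ^ aexp) - C ((p : ℤ)) * U := ⟨V, by rw [hUV]; ring⟩
          obtain ⟨V₂, hV₂⟩ := hdvd1.trans hsub
          refine ⟨V₂, ?_⟩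
          have : ((cyclotomic d' ℤ) ^ (p ^ aexp)) ^ t = (C ((p : ℤ)) * U) ^ t
              + cyclotomic d ℤ * V₂ := by rw [← hV₂]; ring
          rw [pow_mul, this, mul_pow]
        obtain ⟨V₂, hV₂⟩ := h2
        obtain ⟨g₂, hg₂⟩ := h1
        have h3 : hasseDeriv j (f N'') = ((p : ℤ) ^ t) • (U ^ t * g₂)
            + cyclotomic d ℤ * (V₂ * g₂) := by
          rw [hg₂, hV₂, smul_eq_C_mul, map_pow]
          ring
        have h4 : (hasseDeriv j (f N'')) %ₘ cyclotomic d ℤ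
            = ((p : ℤ) ^ t) • ((U ^ t * g₂) %ₘ cyclotomic d ℤ) := by
          rw [h3, add_modByMonic, smul_modByMonic]
          have hz : (cyclotomic d ℤ * (V₂ * g₂)) %ₘ cyclotomic d ℤ = 0 :=
            (modByMonic_eq_zero_iff_dvd hmonic).2 (dvd_mul_right _ _)
          rw [hz, add_zero]
        have h5 := stable_modByMonic_hasseDeriv hcompat (d := d) (j := j) (by omega)
          (le_max_right (d' * E) (d * (j + 1)))
        rw [← h5, h4]
        rw [coeff_smul]
        exact Dvd.intro _ rfl
      apply cyclotomic_pow_dvd_of_hasseDeriv (by omega)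
      intro j hj
      apply hkey j N
      calc d * (j + 1) ≤ d * e := Nat.mul_le_mul_left d (by omega)
        _ ≤ N := hN
-- ===== Section I : from cyclotomic powers to qPoch =====

lemma qPoch_dvd_of_cyclotomic_pow_dvd {n : ℕ} {g : Polynomial ℤ}
    (h : ∀ d : ℕ, 1 ≤ d → d ≤ n → (cyclotomic d ℤ) ^ n ∣ g) : qPoch n ∣ g := by
  classical
  rcases Nat.eq_zero_or_pos n with rfl | hn
  · simpa [qPoch] using one_dvd g
  apply int_dvd_of_complex_dvd (qPoch_monic n)
  set U : Finset ℂ := (Finset.range n).biUnion (fun i => primitiveRoots (i + 1) ℂ) with hU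
  set Q : Polynomial ℂ := ∏ μ ∈ U, (X - C μ) with hQ
  have h1 : (qPoch n).map (Int.castRingHom ℂ) ∣ Q ^ n := by
    rw [qPoch, Polynomial.map_prod]
    have h2 : ∀ i ∈ Finset.range n,
        ((X ^ (i + 1) - 1 : Polynomial ℤ)).map (Int.castRingHom ℂ) ∣ Q := by
      intro i hi
      have hmap : ((X ^ (i + 1) - 1 : Polynomial ℤ)).map (Int.castRingHom ℂ)
          = (X ^ (i + 1) - 1 : Polynomial ℂ) := by
        simp
      rw [hmap]
      obtain ⟨ζ, hζ⟩ : ∃ ζ : ℂ, IsPrimitiveRoot ζ (i + 1) :=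
        ⟨_, Complex.isPrimitiveRoot_exp _ (Nat.succ_ne_zero i)⟩
      rw [X_pow_sub_one_eq_prod (Nat.succ_pos i) hζ]
      apply Finset.prod_dvd_prod_of_subset
      intro μ hμ
      have hμ1 : μ ^ (i + 1) = 1 :=
        (Polynomial.mem_nthRootsFinset (Nat.succ_pos i) 1).1 hμ
      have hfin : orderOf μ ∣ i + 1 := orderOf_dvd_of_pow_eq_one hμ1
      have hord_pos : 0 < orderOf μ := by
        have hf : IsOfFinOrder μ := isOfFinOrder_iff_pow_eq_one.2 ⟨i + 1, Nat.succ_pos i, hμ1⟩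
        exact hf.orderOf_pos
      rw [hU, Finset.mem_biUnion]
      have hle : orderOf μ ≤ i + 1 := Nat.le_of_dvd (Nat.succ_pos i) hfin
      have hin : i < n := Finset.mem_range.1 hi
      refine ⟨orderOf μ - 1, ?_, ?_⟩
      · rw [Finset.mem_range]; omega
      · have horder : orderOf μ - 1 + 1 = orderOf μ := by omega
        rw [horder, mem_primitiveRoots hord_pos]
        exact IsPrimitiveRoot.orderOf μ
    calc (∏ i ∈ Finset.range n, ((X ^ (i + 1) - 1 : Polynomial ℤ)).map (Int.castRingHom ℂ))
        ∣ ∏ _i ∈ Finset.range n, Q := Finset.prod_dvd_prod_of_dvd _ _ h2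
      _ = Q ^ n := by rw [Finset.prod_const, Finset.card_range]
  have h3 : Q ^ n ∣ g.map (Int.castRingHom ℂ) := by
    rw [hQ, ← Finset.prod_pow]
    apply Finset.prod_dvd_of_coprime
    · intro μ hμ ν hν hne
      exact ((Polynomial.pairwise_coprime_X_sub_C Function.injective_id) hne).pow
    · intro μ hμ
      rw [hU, Finset.mem_biUnion] at hμ
      obtain ⟨i, hi, hμi⟩ := hμ
      have hin : i < n := Finset.mem_range.1 hi
      have hidvd := h (i + 1) (Nat.succ_pos i) (by omega)
      have hXdvd : (X - C μ) ∣ cyclotomic (i + 1) ℂ := by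
        obtain ⟨ζ, hζ⟩ : ∃ ζ : ℂ, IsPrimitiveRoot ζ (i + 1) :=
          ⟨_, Complex.isPrimitiveRoot_exp _ (Nat.succ_ne_zero i)⟩
        rw [cyclotomic_eq_prod_X_sub_primitiveRoots hζ]
        exact Finset.dvd_prod_of_mem _ hμi
      refine (pow_dvd_pow_of_dvd hXdvd n).trans ?_
      have hmapdvd := Polynomial.map_dvd (Int.castRingHom ℂ) hidvd
      simpa only [Polynomial.map_pow, map_cyclotomic_int] using hmapdvd
  exact h1.trans h3
/-- If `x ∈ Ẑ[q]^` and there are infinitely many roots of unity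
`ζ ∈ ℂ` of prime power order such that `ev_ζ(x) = 0` (where `ev_ζ` is induced by
evaluation `q ↦ ζ`, computed on any polynomial representative of `π_{ord ζ}(x)`),
then `x = 0`. -/
theorem habiro_detected_by_prime_power_roots_of_unity (x : HabiroRing)
    (h : {ζ : ℂ | (∃ p k : ℕ, p.Prime ∧ orderOf ζ = p ^ k) ∧
      ∀ f : Polynomial ℤ,
        habiroPi (orderOf ζ) x = Ideal.Quotient.mk (Ideal.span {qPoch (orderOf ζ)}) f →
        Polynomial.eval₂ (Int.castRingHom ℂ) ζ f = 0}.Infinite) :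
    x = 0 := by
  classical
  have hsurj : ∀ n : ℕ, ∃ g : Polynomial ℤ,
      Ideal.Quotient.mk (Ideal.span {qPoch n}) g = x.1 n :=
    fun n => Ideal.Quotient.mk_surjective (x.1 n)
  choose f hf using hsurj
  have hpi : ∀ n, habiroPi n x = Ideal.Quotient.mk (Ideal.span {qPoch n}) (f n) :=
    fun n => (hf n).symm
  have hdown : ∀ N, habiroPi N x = habiroTrans N (habiroPi (N + 1) x) :=
    fun N => (x.2 N).symm
  have key : ∀ k N : ℕ, habiroPi N x = Ideal.Quotient.mk (Ideal.span {qPoch N}) (f (N + k)) := by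
    intro k
    induction k with
    | zero => intro N; simpa using hpi N
    | succ k ih =>
      intro N
      have h1 := ih (N + 1)
      have h2 := hdown N
      rw [h2, h1]
      rw [show N + 1 + k = N + (k + 1) from by omega]
      exact Ideal.Quotient.factor_mk _ _
  have hkey' : ∀ n N : ℕ, n ≤ N →
      habiroPi n x = Ideal.Quotient.mk (Ideal.span {qPoch n}) (f N) := by
    intro n N hnN
    have := key (N - n) n
    rwa [show n + (N - n) = N from by omega] at this
  have hcompat : ∀ {n N : ℕ}, n ≤ N → qPoch n ∣ f N - f n := by
    intro n N hnN
    have h1 := hkey' n N hnN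
    have h2 := hpi n
    rw [h1] at h2
    have h3 := (Ideal.Quotient.eq).1 h2
    rwa [Ideal.mem_span_singleton] at h3
  set T := {ζ : ℂ | (∃ p k : ℕ, p.Prime ∧ orderOf ζ = p ^ k) ∧
      ∀ f : Polynomial ℤ,
        habiroPi (orderOf ζ) x = Ideal.Quotient.mk (Ideal.span {qPoch (orderOf ζ)}) f →
        Polynomial.eval₂ (Int.castRingHom ℂ) ζ f = 0} with hT
  have hord : ∀ ζ ∈ T, ∃ p k : ℕ, p.Prime ∧ orderOf ζ = p ^ k := fun ζ hζ => hζ.1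
  have hev : ∀ ζ ∈ T, ∀ N, orderOf ζ ≤ N → eval₂ (Int.castRingHom ℂ) ζ (f N) = 0 := by
    intro ζ hζ N hN
    exact hζ.2 (f N) (hkey' (orderOf ζ) N hN)
  have hbase := taylor_coeffs_vanish hcompat h hord hev
  have hmain := main_induction hcompat hbase
  have hdvd : ∀ n : ℕ, qPoch n ∣ f n := by
    intro n
    set N := n * n + n with hNdef
    have hqN : qPoch n ∣ f N := by
      apply qPoch_dvd_of_cyclotomic_pow_dvd
      intro d hd1 hdn
      apply hmain d hd1 n N
      calc d * n ≤ n * n := Nat.mul_le_mul_right n hdn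
        _ ≤ N := by omega
    have hsub : qPoch n ∣ f N - f n := hcompat (by omega)
    have : f n = f N - (f N - f n) := by ring
    rw [this]
    exact dvd_sub hqN hsub
  apply Subtype.ext
  funext n
  have h0 : x.1 n = Ideal.Quotient.mk (Ideal.span {qPoch n}) (f n) := (hf n).symm
  have hz : Ideal.Quotient.mk (Ideal.span {qPoch n}) (f n) = 0 :=
    Ideal.Quotient.eq_zero_iff_mem.2 (Ideal.mem_span_singleton.2 (hdvd n))
  show x.1 n = _
  rw [h0, hz]
  rfl
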